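/- Let G1 and G2 be isomorphic finite simple graphs with isomorphism π, and let p ∈ [0,1]. Form the random noisy graph Ḡ2 on the vertex set of G2 by removing each edge of G2 independently with probability p; formally, sample keep : E(G2) → Bool from the product over the edge set of Bernoulli distributions with success probability 1 − p, and let Ḡ2 be the spanning subgraph of G2 whose edge set is {e ∈ E(G2) : keep(e) = true}. Then for any node i of G1 with nonempty neighborhood, the expected value of MNC(i, π(i)) — computed with neighborhoods in the second graph taken in Ḡ2 and the mapped neighborhood Ñ^π(i) = π(N_{G1}(i)) — equals 1 − p. -/

import Mathlib

open MeasureTheory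

/-- Matched neighborhood consistency (real-valued): the Jaccard similarity between the
mapped neighborhood `π '' N_{G1}(i)` and the neighborhood `N_{G2'}(j)` where `G2'` may be
a noisy version of the second graph. -/
noncomputable def MNC {V1 V2 : Type*} (G1 : SimpleGraph V1) (G2' : SimpleGraph V2)
    (π : V1 → V2) (i : V1) (j : V2) : ℝ :=
  (((π '' G1.neighborSet i) ∩ G2'.neighborSet j).ncard : ℝ) /
    (((π '' G1.neighborSet i) ∪ G2'.neighborSet j).ncard : ℝ)

/-- The noisy version of `G2` determined by `keep : E(G2) → Bool`: the spanning subgraph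
of `G2` whose edges are exactly the edges of `G2` on which `keep` is `true`. -/
def noisyGraph {V2 : Type*} (G2 : SimpleGraph V2) (keep : G2.edgeSet → Bool) :
    SimpleGraph V2 :=
  SimpleGraph.fromEdgeSet {e : Sym2 V2 | ∃ h : e ∈ G2.edgeSet, keep ⟨e, h⟩ = true}

lemma integral_eval_indicator {ι : Type*} [Fintype ι] [DecidableEq ι]
    (q : NNReal) (hq : q ≤ 1) (e : ι) :
    ∫ keep : ι → Bool, (if keep e = true then (1:ℝ) else 0)
      ∂(Measure.pi fun _ : ι => (PMF.bernoulli q hq).toMeasure) = (q : ℝ) := by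
  have hset : {keep : ι → Bool | keep e = true}
      = Set.pi Set.univ (fun k => if k = e then {true} else Set.univ) := by
    ext f
    simp only [Set.mem_setOf_eq, Set.mem_pi, Set.mem_univ, forall_true_left]
    constructor
    · intro h k
      by_cases hk : k = e <;> simp [hk, h]
    · intro h
      have := h e
      simpa using this
  have hmeas : MeasurableSet {keep : ι → Bool | keep e = true} := by
    have : {keep : ι → Bool | keep e = true} = (fun f : ι → Bool => f e) ⁻¹' {true} := by
      ext f; simp
    rw [this]
    exact (measurable_pi_apply e) (MeasurableSet.singleton true)
  have : (fun keep : ι → Bool => if keep e = true then (1:ℝ) else 0)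
      = Set.indicator {keep : ι → Bool | keep e = true} (fun _ => (1:ℝ)) := by
    ext f
    by_cases h : f e = true <;> simp [h, Set.indicator_apply]
  rw [this, integral_indicator_const _ hmeas, hset, measureReal_def, Measure.pi_pi]
  rw [Finset.prod_eq_single e]
  · simp [PMF.toMeasure_apply_singleton _ _ (MeasurableSet.singleton true),
      PMF.bernoulli_apply]
  · intro k _ hk
    simp only [if_neg hk]
    exact measure_univ
  · simp

/-- Theorem 3.1: Let `π : G1 ≃g G2` be an isomorphism and form `Ḡ2` from
`G2` by removing each edge independently with probability `p`.  Then for every node `i`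
with nonempty neighborhood, `𝔼(MNC(i, π(i))) = 1 - p`. -/
theorem expected_mnc_under_noise {V1 V2 : Type*} [Fintype V1] [Fintype V2]
    [DecidableEq V2] (G1 : SimpleGraph V1) (G2 : SimpleGraph V2) [DecidableRel G2.Adj]
    (π : G1 ≃g G2) (p : ℝ) (hp0 : 0 ≤ p) (hp1 : p ≤ 1)
    (i : V1) (hne : (G1.neighborSet i).Nonempty) :
    ∫ keep : G2.edgeSet → Bool,
        MNC G1 (noisyGraph G2 keep) (⇑π) i (π i)
      ∂(Measure.pi fun _ : G2.edgeSet =>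
        (PMF.bernoulli (Real.toNNReal (1 - p))
          (by rw [Real.toNNReal_le_one]; linarith)).toMeasure)
      = 1 - p := by
  classical
  set N : Finset V2 := G2.neighborFinset (π i) with hNdef
  -- the image of the neighborhood of `i` is the neighborhood of `π i`
  have himg : (⇑π) '' G1.neighborSet i = G2.neighborSet (π i) := by
    ext v
    constructor
    · rintro ⟨u, hu, rfl⟩
      exact π.map_rel_iff.mpr hu
    · intro hv
      refine ⟨π.symm v, ?_, by simp⟩
      have : G2.Adj (π i) (π (π.symm v)) := by simpa using hv
      exact π.map_rel_iff.mp this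
  -- the surviving neighbors, as a finset
  set S : (G2.edgeSet → Bool) → Finset V2 := fun keep =>
    N.filter (fun v => ∃ h : s(π i, v) ∈ G2.edgeSet, keep ⟨s(π i, v), h⟩ = true)
    with hSdef
  have hnoisy : ∀ keep, (noisyGraph G2 keep).neighborSet (π i) = (S keep : Set V2) := by
    intro keep
    ext v
    simp only [SimpleGraph.mem_neighborSet, noisyGraph, SimpleGraph.fromEdgeSet_adj,
      Set.mem_setOf_eq, Finset.coe_filter, hSdef, SimpleGraph.mem_neighborFinset, hNdef]
    constructor
    · rintro ⟨⟨h, hk⟩, _⟩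
      exact ⟨G2.mem_edgeSet.mp h, h, hk⟩
    · rintro ⟨hadj, h, hk⟩
      exact ⟨⟨h, hk⟩, hadj.ne⟩
  have hsub : ∀ keep, ((S keep : Set V2)) ⊆ G2.neighborSet (π i) := by
    intro keep v hv
    have := Finset.mem_of_mem_filter v hv
    simpa [hNdef] using this
  have hNcoe : (N : Set V2) = G2.neighborSet (π i) := by
    rw [hNdef, SimpleGraph.neighborFinset_def, Set.coe_toFinset]
  have hMNC : ∀ keep, MNC G1 (noisyGraph G2 keep) (⇑π) i (π i)
      = ((S keep).card : ℝ) / (N.card : ℝ) := by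
    intro keep
    unfold MNC
    rw [himg, hnoisy keep]
    rw [Set.inter_eq_right.mpr (hsub keep), Set.union_eq_left.mpr (hsub keep),
      ← hNcoe, Set.ncard_coe_finset, Set.ncard_coe_finset]
  have hd : (0:ℝ) < (N.card : ℝ) := by
    have : (G2.neighborSet (π i)).Nonempty := by
      rw [← himg]; exact hne.image _
    obtain ⟨v, hv⟩ := this
    have : v ∈ N := by simpa [hNdef] using hv
    have := Finset.card_pos.mpr ⟨v, this⟩
    exact_mod_cast this
  simp only [hMNC]
  have hcard : ∀ keep : G2.edgeSet → Bool, ((S keep).card : ℝ)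
      = ∑ v ∈ N, (if (∃ h : s(π i, v) ∈ G2.edgeSet, keep ⟨s(π i, v), h⟩ = true)
          then (1:ℝ) else 0) := by
    intro keep
    rw [hSdef]
    rw [Finset.card_filter]
    push_cast
    rfl
  have hint : (∫ keep : G2.edgeSet → Bool, ((S keep).card : ℝ) / (N.card : ℝ)
      ∂(Measure.pi fun _ : G2.edgeSet =>
        (PMF.bernoulli (Real.toNNReal (1 - p))
          (by rw [Real.toNNReal_le_one]; linarith)).toMeasure))
      = ∑ v ∈ N, (∫ keep : G2.edgeSet → Bool,
          (if (∃ h : s(π i, v) ∈ G2.edgeSet, keep ⟨s(π i, v), h⟩ = true)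
            then (1:ℝ) else 0) / (N.card : ℝ)
        ∂(Measure.pi fun _ : G2.edgeSet =>
          (PMF.bernoulli (Real.toNNReal (1 - p))
            (by rw [Real.toNNReal_le_one]; linarith)).toMeasure)) := by
    rw [← integral_finset_sum]
    · congr 1
      ext keep
      rw [hcard keep, Finset.sum_div]
    · intro v _
      exact Integrable.of_finite
  rw [hint]
  have hterm : ∀ v ∈ N, (∫ keep : G2.edgeSet → Bool,
      (if (∃ h : s(π i, v) ∈ G2.edgeSet, keep ⟨s(π i, v), h⟩ = true)
        then (1:ℝ) else 0) / (N.card : ℝ)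
      ∂(Measure.pi fun _ : G2.edgeSet =>
        (PMF.bernoulli (Real.toNNReal (1 - p))
          (by rw [Real.toNNReal_le_one]; linarith)).toMeasure))
      = (1 - p) / (N.card : ℝ) := by
    intro v hv
    have hadj : G2.Adj (π i) v := by simpa [hNdef] using hv
    have hmem : s(π i, v) ∈ G2.edgeSet := G2.mem_edgeSet.mpr hadj
    have heq : (fun keep : G2.edgeSet → Bool =>
        (if (∃ h : s(π i, v) ∈ G2.edgeSet, keep ⟨s(π i, v), h⟩ = true)
          then (1:ℝ) else 0) / (N.card : ℝ))
        = fun keep : G2.edgeSet → Bool =>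
          (if keep ⟨s(π i, v), hmem⟩ = true then (1:ℝ) else 0) / (N.card : ℝ) := by
      ext keep
      congr 1
      apply if_congr _ rfl rfl
      constructor
      · rintro ⟨h, hk⟩; exact hk
      · intro hk; exact ⟨hmem, hk⟩
    rw [heq]
    have hkey := integral_eval_indicator (ι := G2.edgeSet) (Real.toNNReal (1 - p))
      (by rw [Real.toNNReal_le_one]; linarith) ⟨s(π i, v), hmem⟩
    rw [integral_div, hkey, Real.coe_toNNReal _ (by linarith)]
  rw [Finset.sum_congr rfl hterm, Finset.sum_const, nsmul_eq_mul]
  field_simp
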